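/- arXiv:2106.16197 — 2 statements merged into one kernel-verified Lean document; each statement's English description precedes it below -/
import Mathlib

section
/- Fix an integer k ≥ 1 and let θ = π/2^k. Define the 3×3 real matrices A_a = [[cos θ, −sin θ, 0],[sin θ, cos θ, 0],[1−cos θ−sin θ, 1+sin θ−cos θ, 1]] and A_$ = [[1,0,1/2],[0,1,0],[0,0,1/2]]. Then for every j ≥ 0, the vector v_f(j) = A_$ · (A_a)^{j·2^k} · (1,0,0)ᵀ equals (1,0,0)ᵀ if j is even and equals (0,0,1)ᵀ if j is odd; consequently, with accepting state 1, inputs a^{j·2^k} with j even are accepted with probability 1 and inputs a^{j·2^k} with j odd are accepted with probability 0. (Hence the promise problem MOD2^k, with yes-instances {a^{j·2^k} : j even} and no-instances {a^{j·2^k} : j odd}, is solved by a 3-state affine finite automaton with zero error.) -/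
open Matrix Real

/-- The affine operator applied on each input symbol `a` (rotation by `θ`,
augmented to an affine operator). -/
noncomputable def AaM (θ : ℝ) : Matrix (Fin 3) (Fin 3) ℝ :=
  !![Real.cos θ, -Real.sin θ, 0;
     Real.sin θ, Real.cos θ, 0;
     1 - Real.cos θ - Real.sin θ, 1 + Real.sin θ - Real.cos θ, 1]

/-- The affine operator applied on the right end-marker `$`. -/
noncomputable def AdollarP : Matrix (Fin 3) (Fin 3) ℝ :=
  !![1, 0, 1/2; 0, 1, 0; 0, 0, 1/2]

/-- The final affine state on the input `a^{j·2^k}` (with `θ = π/2^k`). -/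
noncomputable def vfP (k : ℕ) (j : ℕ) : Fin 3 → ℝ :=
  (AdollarP * AaM (Real.pi / 2 ^ k) ^ (j * 2 ^ k)) *ᵥ ![1, 0, 0]

/-- The acceptance probability (accepting state: the first state). -/
noncomputable def probP (k : ℕ) (j : ℕ) : ℝ :=
  |vfP k j 0| / (|vfP k j 0| + |vfP k j 1| + |vfP k j 2|)

lemma AaM_mul (α β : ℝ) : AaM α * AaM β = AaM (α + β) := by
  simp only [AaM]
  ext i jj
  fin_cases i <;> fin_cases jj <;>
    simp [Matrix.mul_apply, Fin.sum_univ_three, Real.cos_add, Real.sin_add] <;> ring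

lemma AaM_pow (α : ℝ) (n : ℕ) : AaM α ^ n = AaM (n * α) := by
  induction n with
  | zero =>
      simp only [pow_zero, Nat.cast_zero, zero_mul, AaM, Real.cos_zero, Real.sin_zero]
      ext i jj
      fin_cases i <;> fin_cases jj <;> simp [Matrix.one_apply, Matrix.vecHead, Matrix.vecTail] <;> norm_num
  | succ n ih =>
      rw [pow_succ, ih, AaM_mul]
      push_cast
      ring_nf

/-- For `k ≥ 1` and `θ = π/2^k`: the final vector `v_f(j) = A_$ · (A_a)^{j·2^k} · (1,0,0)ᵀ`
equals `(1,0,0)ᵀ` if `j` is even and `(0,0,1)ᵀ` if `j` is odd; consequently, inputs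
`a^{j·2^k}` with `j` even are accepted with probability `1` and those with `j` odd with
probability `0`: the promise problem `MOD2^k` is solved by a 3-state AfA with zero error. -/
theorem mod2k_solved_with_zero_error (k : ℕ) (hk : 1 ≤ k) (j : ℕ) :
    (Even j → vfP k j = ![1, 0, 0] ∧ probP k j = 1) ∧
    (Odd j → vfP k j = ![0, 0, 1] ∧ probP k j = 0) := by
  have hangle : ((j * 2 ^ k : ℕ) : ℝ) * (Real.pi / 2 ^ k) = j * Real.pi := by
    have h2 : (2 : ℝ) ^ k ≠ 0 := by positivity
    push_cast
    field_simp
  have hv : vfP k j = fun i =>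
      (AdollarP * AaM (j * Real.pi)) *ᵥ ![1, 0, 0] <| i := by
    funext i
    simp only [vfP, AaM_pow, hangle]
  have hcos : Real.cos (j * Real.pi) = (-1) ^ j := by
    simpa using Real.cos_nat_mul_pi_sub 0 j
  have hsin : Real.sin (j * Real.pi) = 0 := Real.sin_nat_mul_pi j
  constructor
  · rintro ⟨m, rfl⟩
    have hc1 : Real.cos ((m + m : ℕ) * Real.pi) = 1 := by
      rw [hcos]; simpa using (Even.neg_one_pow ⟨m, rfl⟩)
    push_cast at hc1 hsin
    have hvf : vfP k (m + m) = ![1, 0, 0] := by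
      rw [hv]
      funext i
      fin_cases i <;>
        simp [AdollarP, AaM, hc1, hsin, Matrix.mul_apply, Matrix.mulVec,
          dotProduct, Fin.sum_univ_three]
    refine ⟨hvf, ?_⟩
    simp [probP, hvf]
  · rintro ⟨m, rfl⟩
    have hc1 : Real.cos ((2 * m + 1 : ℕ) * Real.pi) = -1 := by
      rw [hcos]; simpa using (Odd.neg_one_pow ⟨m, by ring⟩)
    push_cast at hc1 hsin
    have hvf : vfP k (2 * m + 1) = ![0, 0, 1] := by
      rw [hv]
      funext i
      fin_cases i <;>
        simp [AdollarP, AaM, hc1, hsin, Matrix.mul_apply, Matrix.mulVec,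
          dotProduct, Fin.sum_univ_three] <;> norm_num
    refine ⟨hvf, ?_⟩
    simp [probP, hvf]
end

section
/- For every integer n ≥ 2, the language END_n = { w ∈ {0,1}* : the n-th symbol of w from the right end exists and equals 1 } is recognized by an (n+1)-state affine finite automaton with zero error: every member of END_n is accepted with probability 1 and every non-member with probability 0. -/
open Matrix

/-- A nondeterministic finite automaton with `n` states over alphabet `α`:
a transition function `δ`, an initial state, and a set of accepting states. -/
structure NFAb (α : Type) (n : ℕ) where
  δ : Fin n → α → Finset (Fin n)
  start : Fin n
  accept : Finset (Fin n)

/-- `q` is a complete nondeterministic computation path of the transition function `δ`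
on the input string `x`: `q_r ∈ δ(q_{r−1}, x_r)` for all `1 ≤ r ≤ |x|`. -/
def IsPath {α : Type} {n : ℕ} (δ : Fin n → α → Finset (Fin n))
    (x : List α) (q : Fin (x.length + 1) → Fin n) : Prop :=
  ∀ r : Fin x.length, q r.succ ∈ δ (q r.castSucc) (x.get r)

/-- The NFA accepts `x` if some computation path on `x` starting at the initial state
ends in an accepting state. -/
def NFAb.Accepts {α : Type} {n : ℕ} (M : NFAb α n) (x : List α) : Prop :=
  ∃ q : Fin (x.length + 1) → Fin n,
    q 0 = M.start ∧ IsPath M.δ x q ∧ q (Fin.last x.length) ∈ M.accept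

/-- The number of accepting nondeterministic computation paths of the NFA on `x`. -/
noncomputable def NFAb.accPathCount {α : Type} {n : ℕ} (M : NFAb α n) (x : List α) : ℕ :=
  Nat.card {q : Fin (x.length + 1) → Fin n //
    q 0 = M.start ∧ IsPath M.δ x q ∧ q (Fin.last x.length) ∈ M.accept}

/-- An affine finite automaton (AfA) with `N` states: an initial affine state (entry sum
`1`), an affine operator (each column summing to `1`) for the left end-marker `¢`, for
each input symbol, and for the right end-marker `$`, and a set of accepting states. -/
structure AfA (α : Type) (N : ℕ) where
  init : Fin N → ℝ
  init_sum : ∑ i, init i = 1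
  opL : Matrix (Fin N) (Fin N) ℝ
  op : α → Matrix (Fin N) (Fin N) ℝ
  opR : Matrix (Fin N) (Fin N) ℝ
  opL_affine : ∀ j, ∑ i, opL i j = 1
  op_affine : ∀ a j, ∑ i, op a i j = 1
  opR_affine : ∀ j, ∑ i, opR i j = 1
  accept : Finset (Fin N)

/-- The final state of the AfA on input `x`: the initial state multiplied by the
operators of `¢`, the input symbols, and `$`, in order. -/
noncomputable def AfA.final {α : Type} {N : ℕ} (M : AfA α N) (x : List α) : Fin N → ℝ :=
  M.opR *ᵥ x.foldl (fun v a => M.op a *ᵥ v) (M.opL *ᵥ M.init)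

/-- The acceptance probability of the AfA on input `x`: the sum of the absolute values
of the final-state entries at accepting states, divided by the ℓ₁-norm of the final
state. -/
noncomputable def AfA.prob {α : Type} {N : ℕ} (M : AfA α N) (x : List α) : ℝ :=
  (∑ i ∈ M.accept, |M.final x i|) / (∑ i, |M.final x i|)

/-- `END_n`: the language of binary strings whose `n`-th symbol from the right end
exists and equals `1` (`true`). -/
def ENDL (n : ℕ) : Set (List Bool) :=
  {w | n ≤ w.length ∧ w.getD (w.length - n) false = true}

noncomputable section AfAEndAux

/-- numeric value of a bit -/
def bval (b : Bool) : ℝ := if b then 1 else 0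

/-- the `k`-th symbol from the right of `x`, as a real number (0 if nonexistent) -/
def bitR (x : List Bool) (k : ℕ) : ℝ :=
  if 1 ≤ k ∧ k ≤ x.length then bval (x.getD (x.length - k) false) else 0

lemma bitR_nil (k : ℕ) : bitR [] k = 0 := by
  simp only [bitR, List.length_nil]
  split <;> [omega; rfl]

lemma bitR_zero (x : List Bool) : bitR x 0 = 0 := by simp [bitR]

lemma bitR_concat_one (x : List Bool) (a : Bool) : bitR (x ++ [a]) 1 = bval a := by
  have h1 : (x ++ [a]).length = x.length + 1 := by simp
  simp only [bitR, h1]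
  rw [if_pos (by omega)]
  have : x.length + 1 - 1 = x.length := by omega
  rw [this]
  simp

lemma bitR_concat_succ (x : List Bool) (a : Bool) (k : ℕ) (hk : 1 ≤ k) :
    bitR (x ++ [a]) (k + 1) = bitR x k := by
  have h1 : (x ++ [a]).length = x.length + 1 := by simp
  by_cases h : k ≤ x.length
  · simp only [bitR, h1]
    rw [if_pos (by omega), if_pos (by omega)]
    have h2 : x.length + 1 - (k + 1) = x.length - k := by omega
    have h3 : x.length - k < x.length := by omega
    rw [h2, List.getD, List.getD, List.getElem?_append_left h3]
  · simp only [bitR, h1]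
    rw [if_neg (by omega), if_neg (by omega)]

/-- partial sum of the shift register bits -/
def Sm (n : ℕ) (x : List Bool) : ℝ := ∑ k ∈ Finset.range (n + 1), bitR x k

/-- the target affine state after reading `x` -/
def tgt (n : ℕ) (x : List Bool) : Fin (n + 1) → ℝ :=
  fun i => if (i : ℕ) = 0 then 1 - Sm n x else bitR x i

lemma tgt_sum (n : ℕ) (x : List Bool) : ∑ i, tgt n x i = 1 := by
  have hpt : ∀ i : Fin (n + 1),
      tgt n x i = bitR x i + (if (i : ℕ) = 0 then 1 - Sm n x else 0) := by
    intro i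
    by_cases h : (i : ℕ) = 0
    · simp [tgt, h, bitR_zero]
    · simp [tgt, h]
  calc ∑ i, tgt n x i
      = ∑ i : Fin (n+1), (bitR x i + (if (i : ℕ) = 0 then 1 - Sm n x else 0)) :=
        Finset.sum_congr rfl (fun i _ => hpt i)
    _ = (∑ i : Fin (n+1), bitR x i) + ∑ i : Fin (n+1), (if (i : ℕ) = 0 then 1 - Sm n x else 0) :=
        Finset.sum_add_distrib
    _ = Sm n x + (1 - Sm n x) := by
        congr 1
        · rw [Fin.sum_univ_eq_sum_range (fun k => bitR x k)]; rfl
        · rw [Fin.sum_univ_eq_sum_range (fun k => if k = 0 then 1 - Sm n x else 0)]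
          rw [Finset.sum_ite_eq' (Finset.range (n+1)) 0 (fun _ => 1 - Sm n x)]
          simp
    _ = 1 := by ring

/-- the per-symbol affine operator -/
def opA (n : ℕ) (a : Bool) : Matrix (Fin (n+1)) (Fin (n+1)) ℝ :=
  fun i j =>
    if (i : ℕ) = 0 then
      (if (j : ℕ) = 0 then 1 else 0) + (if (j : ℕ) = n then 1 else 0) - bval a
    else if (i : ℕ) = 1 then bval a
    else if (j : ℕ) + 1 = (i : ℕ) then 1 else 0

/-- the right end-marker operator -/
def opRm (n : ℕ) : Matrix (Fin (n+1)) (Fin (n+1)) ℝ :=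
  fun i j =>
    if (i : ℕ) = n then (if (j : ℕ) = n then 1 else 0)
    else if (i : ℕ) = 0 then (if (j : ℕ) = n then 0 else 1)
    else 0

lemma sum_fin_single {m : ℕ} (f : Fin m → ℝ) (c : Fin m) (h0 : ∀ j, j ≠ c → f j = 0) :
    ∑ j, f j = f c :=
  Finset.sum_eq_single c (fun b _ hb => h0 b hb) (fun h => absurd (Finset.mem_univ c) h)

lemma opA_affine (n : ℕ) (hn : 2 ≤ n) (a : Bool) (j : Fin (n+1)) :
    ∑ i, opA n a i j = 1 := by
  obtain ⟨jv, hjv⟩ : ∃ m : ℕ, (j : ℕ) = m := ⟨_, rfl⟩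
  have hjle : jv ≤ n := by rw [← hjv]; exact Nat.lt_succ_iff.mp j.isLt
  have h1 : ∑ i : Fin (n+1), opA n a i j
      = ∑ k ∈ Finset.range (n+1), (fun k => if k = 0 then
          ((if jv = 0 then (1:ℝ) else 0) + (if jv = n then 1 else 0) - bval a)
        else if k = 1 then bval a else if jv + 1 = k then 1 else 0) k := by
    rw [← Fin.sum_univ_eq_sum_range]
    refine Finset.sum_congr rfl (fun i _ => ?_)
    simp only [opA, hjv]
  rw [h1]
  have hsplit : ∀ k : ℕ, (if k = 0 then
          ((if jv = 0 then (1:ℝ) else 0) + (if jv = n then 1 else 0) - bval a)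
        else if k = 1 then bval a else if jv + 1 = k then 1 else 0)
      = (if k = 0 then ((if jv = 0 then (1:ℝ) else 0) + (if jv = n then 1 else 0) - bval a)
          else 0)
        + (if k = 1 then bval a else 0) + (if 2 ≤ k ∧ k = jv + 1 then 1 else 0) := by
    intro k
    split_ifs <;> first | omega | ring
  rw [Finset.sum_congr rfl (fun k _ => hsplit k), Finset.sum_add_distrib,
    Finset.sum_add_distrib,
    Finset.sum_ite_eq' (Finset.range (n+1)) 0
      (fun _ => ((if jv = 0 then (1:ℝ) else 0) + (if jv = n then 1 else 0) - bval a)),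
    Finset.sum_ite_eq' (Finset.range (n+1)) 1 (fun _ => bval a),
    if_pos (Finset.mem_range.mpr (by omega)), if_pos (Finset.mem_range.mpr (by omega))]
  by_cases hcase : 1 ≤ jv ∧ jv < n
  · have h3 : ∀ k, (if 2 ≤ k ∧ k = jv + 1 then (1:ℝ) else 0)
        = if k = jv + 1 then 1 else 0 := by
      intro k; split_ifs <;> first | omega | rfl
    rw [Finset.sum_congr rfl (fun k _ => h3 k),
      Finset.sum_ite_eq' (Finset.range (n+1)) (jv+1) (fun _ => (1:ℝ)),
      if_pos (Finset.mem_range.mpr (by omega)),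
      if_neg (by omega : ¬ jv = 0), if_neg (by omega : ¬ jv = n)]
    ring
  · have h3 : ∑ k ∈ Finset.range (n+1), (if 2 ≤ k ∧ k = jv + 1 then (1:ℝ) else 0) = 0 :=
      Finset.sum_eq_zero (fun k hk => by
        rw [Finset.mem_range] at hk
        rw [if_neg (by omega)])
    rw [h3]
    split_ifs <;> first | omega | ring

lemma opRm_affine (n : ℕ) (hn : 2 ≤ n) (j : Fin (n+1)) : ∑ i, opRm n i j = 1 := by
  obtain ⟨jv, hjv⟩ : ∃ m : ℕ, (j : ℕ) = m := ⟨_, rfl⟩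
  have hsplit : ∀ i : Fin (n+1), opRm n i j
      = (if (i : ℕ) = n then (if jv = n then 1 else 0) else 0)
      + (if (i : ℕ) = 0 then (if jv = n then 0 else 1) else 0) := by
    intro i
    obtain ⟨iv, hiv⟩ : ∃ m : ℕ, (i : ℕ) = m := ⟨_, rfl⟩
    simp only [opRm, hjv, hiv]
    split_ifs <;> first | omega | ring
  rw [Finset.sum_congr rfl (fun i _ => hsplit i), Finset.sum_add_distrib]
  have e1 : ∑ i : Fin (n+1), (if (i : ℕ) = n then (if jv = n then (1:ℝ) else 0) else 0)
      = (if jv = n then 1 else 0) := by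
    rw [sum_fin_single _ (Fin.last n) (fun i hi => if_neg (fun h => hi
      (Fin.ext (h.trans (Fin.val_last n).symm))))]
    rw [if_pos (Fin.val_last n)]
  have e2 : ∑ i : Fin (n+1), (if (i : ℕ) = 0 then (if jv = n then (0:ℝ) else 1) else 0)
      = (if jv = n then 0 else 1) := by
    rw [sum_fin_single _ 0 (fun i hi => if_neg (fun h => hi
      (Fin.ext (h.trans (Fin.val_zero (n+1)).symm))))]
    rw [if_pos (Fin.val_zero (n+1))]
  rw [e1, e2]
  split_ifs <;> ring


lemma Sm_nil (n : ℕ) : Sm n [] = 0 :=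
  Finset.sum_eq_zero (fun k _ => bitR_nil k)

lemma Sm_concat (n : ℕ) (hn : 1 ≤ n) (x : List Bool) (a : Bool) :
    Sm n (x ++ [a]) = bval a + Sm n x - bitR x n := by
  obtain ⟨m, rfl⟩ : ∃ m, n = m + 1 := ⟨n - 1, by omega⟩
  have hL : Sm (m+1) (x ++ [a]) = (∑ k ∈ Finset.range m, bitR x (k+1)) + bval a := by
    rw [Sm, Finset.sum_range_succ', Finset.sum_range_succ', bitR_zero, add_zero]
    have h1 : bitR (x ++ [a]) (0 + 1) = bval a := by
      simpa using bitR_concat_one x a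
    rw [h1]
    congr 1
    refine Finset.sum_congr rfl (fun k _ => ?_)
    have := bitR_concat_succ x a (k+1) (by omega)
    simpa using this
  have hR : Sm (m+1) x = (∑ k ∈ Finset.range m, bitR x (k+1)) + bitR x (m+1) := by
    rw [Sm, Finset.sum_range_succ', bitR_zero, add_zero, Finset.sum_range_succ]
  rw [hL, hR]; ring

lemma tgt_zero (n : ℕ) (x : List Bool) : tgt n x 0 = 1 - Sm n x := by
  simp [tgt]

lemma tgt_last (n : ℕ) (hn : 1 ≤ n) (x : List Bool) : tgt n x (Fin.last n) = bitR x n := by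
  rw [tgt, Fin.val_last, if_neg (by omega)]

lemma opA_step (n : ℕ) (hn : 2 ≤ n) (a : Bool) (x : List Bool) :
    opA n a *ᵥ tgt n x = tgt n (x ++ [a]) := by
  funext i
  obtain ⟨iv, hiv⟩ : ∃ m : ℕ, (i : ℕ) = m := ⟨_, rfl⟩
  have hile : iv ≤ n := by rw [← hiv]; exact Nat.lt_succ_iff.mp i.isLt
  simp only [Matrix.mulVec, dotProduct]
  by_cases hi0 : iv = 0
  · have hrow : ∀ j : Fin (n+1), opA n a i j * tgt n x j
        = (if (j:ℕ) = 0 then tgt n x j else 0) + (if (j:ℕ) = n then tgt n x j else 0)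
          - bval a * tgt n x j := by
      intro j
      rw [opA, if_pos (hiv.trans hi0)]
      split_ifs <;> ring
    rw [Finset.sum_congr rfl (fun j _ => hrow j)]
    rw [Finset.sum_sub_distrib, Finset.sum_add_distrib, ← Finset.mul_sum, tgt_sum]
    rw [sum_fin_single (fun j => if (j:ℕ) = 0 then tgt n x j else 0) 0
      (fun j hj => if_neg (fun h => hj (Fin.ext (h.trans (Fin.val_zero (n+1)).symm))))]
    rw [sum_fin_single (fun j => if (j:ℕ) = n then tgt n x j else 0) (Fin.last n)
      (fun j hj => if_neg (fun h => hj (Fin.ext (h.trans (Fin.val_last n).symm))))]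
    rw [if_pos (Fin.val_zero (n+1)), if_pos (Fin.val_last n), tgt_zero,
      tgt_last n (by omega) x]
    rw [tgt, hiv, if_pos hi0, Sm_concat n (by omega) x a]
    ring
  · by_cases hi1 : iv = 1
    · have hrow : ∀ j : Fin (n+1), opA n a i j * tgt n x j = bval a * tgt n x j := by
        intro j
        rw [opA, if_neg (by omega : ¬ (i:ℕ) = 0), if_pos (hiv.trans hi1)]
      rw [Finset.sum_congr rfl (fun j _ => hrow j), ← Finset.mul_sum, tgt_sum, mul_one]
      rw [tgt, hiv, if_neg (by omega), hi1, bitR_concat_one]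
    · have h2 : 2 ≤ iv := by omega
      set j0 : Fin (n+1) := ⟨iv - 1, by omega⟩ with hj0
      have hrow : ∀ j : Fin (n+1), opA n a i j * tgt n x j
          = if (j:ℕ) + 1 = iv then tgt n x j else 0 := by
        intro j
        rw [opA, if_neg (by omega : ¬ (i:ℕ) = 0), if_neg (by omega : ¬ (i:ℕ) = 1), hiv]
        split_ifs <;> ring
      rw [Finset.sum_congr rfl (fun j _ => hrow j)]
      rw [sum_fin_single (fun j => if (j:ℕ) + 1 = iv then tgt n x j else 0) j0
        (fun j hj => if_neg (fun h => hj (Fin.ext (by simp only [hj0]; omega))))]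
      have hj0v : (j0 : ℕ) = iv - 1 := rfl
      rw [if_pos (by omega), tgt, hj0v, if_neg (by omega), tgt, hiv, if_neg (by omega)]
      have hb := bitR_concat_succ x a (iv - 1) (by omega)
      rw [show iv - 1 + 1 = iv from by omega] at hb
      exact hb.symm

lemma base_eq (n : ℕ) :
    (1 : Matrix (Fin (n+1)) (Fin (n+1)) ℝ) *ᵥ (fun i => if i = 0 then (1:ℝ) else 0)
      = tgt n [] := by
  rw [Matrix.one_mulVec]
  funext i
  by_cases h : i = 0
  · rw [if_pos h, tgt, h, Fin.val_zero, if_pos rfl, Sm_nil]; ring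
  · have h' : ¬ (i:ℕ) = 0 := fun hv => h (Fin.ext (by simp [hv]))
    rw [if_neg h, tgt, if_neg h', bitR_nil]

lemma foldl_tgt (n : ℕ) (hn : 2 ≤ n) (x : List Bool) :
    x.foldl (fun v a => opA n a *ᵥ v) (tgt n []) = tgt n x := by
  induction x using List.reverseRecOn with
  | nil => rfl
  | append_singleton y a ih =>
      rw [List.foldl_append, List.foldl_cons, List.foldl_nil, ih, opA_step n hn]

lemma final_eq (n : ℕ) (hn : 2 ≤ n) (x : List Bool) :
    opRm n *ᵥ tgt n x
      = fun i : Fin (n+1) =>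
          if (i:ℕ) = n then bitR x n else if (i:ℕ) = 0 then 1 - bitR x n else 0 := by
  funext i
  obtain ⟨iv, hiv⟩ : ∃ m : ℕ, (i : ℕ) = m := ⟨_, rfl⟩
  simp only [Matrix.mulVec, dotProduct, hiv]
  by_cases hin : iv = n
  · have hrow : ∀ j : Fin (n+1), opRm n i j * tgt n x j
        = if (j:ℕ) = n then tgt n x j else 0 := by
      intro j
      rw [opRm, if_pos (hiv.trans hin)]
      split_ifs <;> ring
    rw [Finset.sum_congr rfl (fun j _ => hrow j)]
    rw [sum_fin_single (fun j => if (j:ℕ) = n then tgt n x j else 0) (Fin.last n)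
      (fun j hj => if_neg (fun h => hj (Fin.ext (h.trans (Fin.val_last n).symm))))]
    rw [if_pos (Fin.val_last n), tgt_last n (by omega) x, if_pos hin]
  · by_cases hi0 : iv = 0
    · have hrow : ∀ j : Fin (n+1), opRm n i j * tgt n x j
          = tgt n x j - (if (j:ℕ) = n then tgt n x j else 0) := by
        intro j
        rw [opRm, if_neg (by omega : ¬ (i:ℕ) = n), if_pos (hiv.trans hi0)]
        split_ifs <;> ring
      rw [Finset.sum_congr rfl (fun j _ => hrow j), Finset.sum_sub_distrib, tgt_sum]
      rw [sum_fin_single (fun j => if (j:ℕ) = n then tgt n x j else 0) (Fin.last n)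
        (fun j hj => if_neg (fun h => hj (Fin.ext (h.trans (Fin.val_last n).symm))))]
      rw [if_pos (Fin.val_last n), tgt_last n (by omega) x, if_neg hin, if_pos hi0]
    · have hrow : ∀ j : Fin (n+1), opRm n i j * tgt n x j = 0 := by
        intro j
        rw [opRm, if_neg (by omega : ¬ (i:ℕ) = n), if_neg (by omega : ¬ (i:ℕ) = 0),
          zero_mul]
      rw [Finset.sum_congr rfl (fun j _ => hrow j), Finset.sum_const_zero,
        if_neg hin, if_neg hi0]

lemma bitR_mem (n : ℕ) (hn : 2 ≤ n) (x : List Bool) (hx : x ∈ ENDL n) : bitR x n = 1 := by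
  obtain ⟨h1, h2⟩ := hx
  rw [bitR, if_pos ⟨by omega, h1⟩, h2]
  rfl

lemma bitR_nmem (n : ℕ) (hn : 2 ≤ n) (x : List Bool) (hx : x ∉ ENDL n) : bitR x n = 0 := by
  by_cases h1 : n ≤ x.length
  · have h2 : x.getD (x.length - n) false = false := by
      by_contra h
      exact hx ⟨h1, by simpa using h⟩
    rw [bitR, if_pos ⟨by omega, h1⟩, h2]
    rfl
  · rw [bitR, if_neg (by omega)]

end AfAEndAux

/-- For every `n ≥ 2`, `END_n` is recognized by an `(n+1)`-state AfA with zero error: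
every member is accepted with probability `1` and every non-member with
probability `0`. -/
theorem endl_recognized_by_afa_zero_error (n : ℕ) (hn : 2 ≤ n) :
    ∃ M : AfA Bool (n + 1),
      (∀ x ∈ ENDL n, M.prob x = 1) ∧ (∀ x ∉ ENDL n, M.prob x = 0) := by
  let M : AfA Bool (n + 1) := {
    init := fun i => if i = 0 then 1 else 0
    init_sum := by
      rw [sum_fin_single (fun i => if i = 0 then (1:ℝ) else 0) 0 (fun j hj => if_neg hj)]
      exact if_pos rfl
    opL := 1
    op := opA n
    opR := opRm n
    opL_affine := fun j => by
      simp only [Matrix.one_apply]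
      rw [sum_fin_single (fun i => if i = j then (1:ℝ) else 0) j (fun i hi => if_neg hi)]
      exact if_pos rfl
    op_affine := opA_affine n hn
    opR_affine := opRm_affine n hn
    accept := {Fin.last n} }
  have hfin : ∀ x : List Bool, M.final x = fun i : Fin (n+1) =>
      if (i:ℕ) = n then bitR x n else if (i:ℕ) = 0 then 1 - bitR x n else 0 := by
    intro x
    show opRm n *ᵥ x.foldl (fun v a => opA n a *ᵥ v)
        ((1 : Matrix (Fin (n+1)) (Fin (n+1)) ℝ) *ᵥ fun i => if i = 0 then 1 else 0) = _
    rw [base_eq n, foldl_tgt n hn x, final_eq n hn x]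
  have hprob : ∀ x : List Bool, M.prob x
      = (∑ i ∈ ({Fin.last n} : Finset (Fin (n+1))), |M.final x i|)
        / (∑ i, |M.final x i|) := fun x => rfl
  refine ⟨M, ?_, ?_⟩
  · intro x hx
    rw [hprob x, hfin x, bitR_mem n hn x hx]
    simp only []
    have habs : ∀ i : Fin (n+1),
        |if (i:ℕ) = n then (1:ℝ) else if (i:ℕ) = 0 then 1 - 1 else 0|
          = if (i:ℕ) = n then 1 else 0 := by
      intro i; split_ifs <;> simp
    rw [Finset.sum_congr rfl (fun i _ => habs i), Finset.sum_congr rfl (fun i _ => habs i)]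
    rw [Finset.sum_singleton, if_pos (Fin.val_last n)]
    rw [sum_fin_single (fun i : Fin (n+1) => if (i:ℕ) = n then (1:ℝ) else 0) (Fin.last n)
      (fun i hi => if_neg (fun h => hi (Fin.ext (h.trans (Fin.val_last n).symm)))),
      if_pos (Fin.val_last n)]
    norm_num
  · intro x hx
    rw [hprob x, hfin x, bitR_nmem n hn x hx, Finset.sum_singleton]
    simp [Fin.val_last]
end
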